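/- Let n ≥ 2, a ≥ 2√(n-1), and β_0 = 1/a, β_k = (1 + (n-1)β_{k-1}²)/(a - (n-1)β_{k-1}) − β_{k-1}. Then for all k ≥ 1, (β_{k+1} − β_k)(β_k − β_{k-1}) ≤ 0; that is, the sequence alternates between non-increasing and non-decreasing steps. -/

import Mathlib

set_option maxHeartbeats 1000000 in
theorem stmt_5 (n : ℕ) (hn : 2 ≤ n) (a : ℝ)
    (ha : 2 * Real.sqrt ((n : ℝ) - 1) ≤ a)
    (β : ℕ → ℝ) (h0 : β 0 = 1 / a)
    (hrec : ∀ k : ℕ, β (k + 1) =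
      (1 + ((n : ℝ) - 1) * (β k) ^ 2) / (a - ((n : ℝ) - 1) * β k) - β k) :
    ∀ k : ℕ, (β (k + 2) - β (k + 1)) * (β (k + 1) - β k) ≤ 0 := by
  set m : ℝ := (n : ℝ) - 1 with hm_def
  have hm1 : (1 : ℝ) ≤ m := by
    have : (2 : ℝ) ≤ (n : ℝ) := by exact_mod_cast hn
    simp [hm_def]; linarith
  have hm0 : (0 : ℝ) < m := by linarith
  have hsq : Real.sqrt m ^ 2 = m := Real.sq_sqrt (by linarith)
  have hs1 : (1 : ℝ) ≤ Real.sqrt m := by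
    nlinarith [Real.sqrt_nonneg m]
  have ha0 : (0 : ℝ) < a := by nlinarith [Real.sqrt_nonneg m]
  have ha2 : 4 * m ≤ a ^ 2 := by nlinarith [Real.sqrt_nonneg m]
  -- invariant: 0 < β k and a * β k ≤ 1
  have hinv : ∀ k, 0 < β k ∧ a * β k ≤ 1 := by
    intro k
    induction k with
    | zero =>
      rw [h0]
      constructor
      · positivity
      · rw [mul_one_div, div_self ha0.ne']
    | succ k ih =>
      obtain ⟨hx, hax⟩ := ih
      set x := β k with hx_def
      have hu : 0 < a - m * x := by
        nlinarith [mul_le_mul_of_nonneg_left hax hm0.le]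
      constructor
      · rw [hrec k]
        have h1 : x < (1 + m * x ^ 2) / (a - m * x) := by
          rw [lt_div_iff₀ hu]
          nlinarith [mul_pos (mul_pos hm0 hx) hx]
        linarith
      · rw [hrec k]
        have h1 : 0 < a ^ 2 - m - 2 * a * m * x := by
          nlinarith [mul_le_mul_of_nonneg_left hax hm0.le]
        have h2 : a * ((1 + m * x ^ 2) / (a - m * x)) = (a * (1 + m * x ^ 2)) / (a - m * x) := by
          ring
        have h3 : (a * (1 + m * x ^ 2)) / (a - m * x) ≤ 1 + a * x := by
          rw [div_le_iff₀ hu]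
          nlinarith [mul_pos hx h1]
        calc a * ((1 + m * x ^ 2) / (a - m * x) - x)
            = (a * (1 + m * x ^ 2)) / (a - m * x) - a * x := by ring
          _ ≤ 1 := by linarith
  intro k
  obtain ⟨hx, hax⟩ := hinv k
  obtain ⟨hy, hay⟩ := hinv (k + 1)
  set x := β k with hx_def
  set y := β (k + 1) with hy_def
  set z := β (k + 2) with hz_def
  have hu : 0 < a - m * x := by
    nlinarith [mul_le_mul_of_nonneg_left hax hm0.le]
  have hv : 0 < a - m * y := by
    nlinarith [mul_le_mul_of_nonneg_left hay hm0.le]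
  have hyu : y * (a - m * x) = 1 + 2 * m * x ^ 2 - a * x := by
    rw [hy_def, hrec k, ← hx_def]
    field_simp
    ring
  have hzv : z * (a - m * y) = 1 + 2 * m * y ^ 2 - a * y := by
    rw [hz_def, hrec (k + 1), ← hy_def]
    field_simp
    ring
  have hd1 : (y - x) * (a - m * x) = 3 * m * x ^ 2 - 2 * a * x + 1 := by
    rw [sub_mul, hyu]; ring
  have hd2 : (z - y) * (a - m * y) = 3 * m * y ^ 2 - 2 * a * y + 1 := by
    rw [sub_mul, hzv]; ring
  have key : (3 * m * y ^ 2 - 2 * a * y + 1) * (a - m * x) ^ 2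
      = (3 * m * x ^ 2 - 2 * a * x + 1) * (4 * m ^ 2 * x ^ 2 + 3 * m - a ^ 2) := by
    linear_combination (3 * m * (y * (a - m * x) + (1 + 2 * m * x ^ 2 - a * x))
      - 2 * a * (a - m * x)) * hyu
  have hxx : (a * x) ^ 2 ≤ 1 := by
    nlinarith [mul_pos ha0 hx]
  have hm2 : (0:ℝ) ≤ 4 * m ^ 2 := by positivity
  have ha2' : (0:ℝ) < a ^ 2 := by positivity
  have h5 : 0 ≤ a ^ 2 * (a ^ 2 - 3 * m - 4 * m ^ 2 * x ^ 2) := by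
    nlinarith [mul_le_mul_of_nonneg_left hxx hm2,
      mul_le_mul_of_nonneg_left ha2 hm0.le,
      mul_le_mul_of_nonneg_left ha2 (sq_nonneg a)]
  have hT : 4 * m ^ 2 * x ^ 2 + 3 * m - a ^ 2 ≤ 0 := by
    nlinarith [h5, ha2']
  have e1 : (z - y) * (y - x) * ((a - m * y) * (a - m * x) ^ 3)
      = ((z - y) * (a - m * y)) * (((y - x) * (a - m * x)) * (a - m * x) ^ 2) := by ring
  rw [hd1, hd2] at e1
  have e2 : (z - y) * (y - x) * ((a - m * y) * (a - m * x) ^ 3)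
      = (3 * m * x ^ 2 - 2 * a * x + 1) * ((3 * m * x ^ 2 - 2 * a * x + 1)
        * (4 * m ^ 2 * x ^ 2 + 3 * m - a ^ 2)) := by
    rw [e1]
    linear_combination (3 * m * x ^ 2 - 2 * a * x + 1) * key
  have hfin : (z - y) * (y - x) * ((a - m * y) * (a - m * x) ^ 3) ≤ 0 := by
    rw [e2, ← mul_assoc, ← sq]
    exact mul_nonpos_of_nonneg_of_nonpos (sq_nonneg _) hT
  nlinarith [hfin, mul_pos hv (pow_pos hu 3)]
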